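/- Let T > 0, ū ∈ L²(𝕋²;ℝ²), and let u ∈ L²(0,T;L²(𝕋²;ℝ²)) satisfy ‖u(t)‖_{L²(𝕋²)} = ‖ū‖_{L²(𝕋²)} for almost every t ∈ [0,T]. Suppose (u_k)_{k∈ℕ} is a sequence of continuous maps [0,T] → L²(𝕋²;ℝ²) such that for each k the function t ↦ ‖u_k(t)‖_{L²(𝕋²)} is non-increasing on [0,T], u_k(0) → ū strongly in L²(𝕋²;ℝ²), and u_k converges to u weakly in L²(0,T;L²(𝕋²;ℝ²)). Then u_k → u strongly in L²(0,T;L²(𝕋²;ℝ²)). -/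

import Mathlib

open MeasureTheory Real Set Filter Topology

noncomputable section

/-- Points of `ℝ²`. The flat torus `𝕋² = ℝ²/(2πℤ)²` is realized via `(2πℤ)²`-periodic
functions on `ℝ²`, with integrals taken over the fundamental domain `Q2 = [0,2π)²`. -/
abbrev V : Type := Fin 2 → ℝ

/-- Squared Euclidean norm on `ℝ²`. -/
def sqnorm (v : V) : ℝ := v 0 ^ 2 + v 1 ^ 2

/-- Euclidean dot product on `ℝ²`. -/
def dot (a b : V) : ℝ := a 0 * b 0 + a 1 * b 1

/-- Open Euclidean ball of radius `r` centered at `0` in `ℝ²`. -/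
def ball2 (r : ℝ) : Set V := {h : V | sqnorm h < r ^ 2}

/-- Fundamental domain `[0,2π)²` of the torus `ℝ²/(2πℤ)²`. -/
def Q2 : Set V := Set.univ.pi fun _ => Set.Ico (0 : ℝ) (2 * π)

/-- `(2πℤ)²`-periodicity: a function on `ℝ²` descends to the torus. -/
def Periodic2 {α : Type*} (f : V → α) : Prop :=
  ∀ (x : V) (n : Fin 2 → ℤ), f (fun i => x i + 2 * π * (n i : ℝ)) = f x

/-- Squared `L²(𝕋²)` norm of a vector field. -/
def l2sq (f : V → V) : ℝ := ∫ x in Q2, sqnorm (f x)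

/-- Squared `L²(𝕋²)` norm of a scalar function. -/
def l2sqS (f : V → ℝ) : ℝ := ∫ x in Q2, (f x) ^ 2

/-- Membership in `L²(𝕋²;ℝ²)`. -/
def MemL2x (f : V → V) : Prop :=
  AEMeasurable f (volume.restrict Q2) ∧
    Integrable (fun x => sqnorm (f x)) (volume.restrict Q2)

/-- The measure on `(0,T] × 𝕋²` underlying the Bochner space `L²(0,T;L²(𝕋²))`. -/
def μT (T : ℝ) : Measure (ℝ × V) :=
  (volume.restrict (Set.Ioc (0 : ℝ) T)).prod (volume.restrict Q2)

/-- Membership in `L²(0,T;L²(𝕋²;ℝ²))`. -/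
def MemL2T (T : ℝ) (u : ℝ → V → V) : Prop :=
  Measurable (fun q : ℝ × V => u q.1 q.2) ∧
    Integrable (fun q : ℝ × V => sqnorm (u q.1 q.2)) (μT T)

/-- Inner product of the Hilbert space `L²(0,T;L²(𝕋²;ℝ²))`. -/
def pairT (T : ℝ) (u v : ℝ → V → V) : ℝ :=
  ∫ q, dot (u q.1 q.2) (v q.1 q.2) ∂(μT T)

/-- Distance in `L²(0,T;L²(𝕋²;ℝ²))`. -/
def distL2T (T : ℝ) (u v : ℝ → V → V) : ℝ :=
  Real.sqrt (∫ q, sqnorm (u q.1 q.2 - v q.1 q.2) ∂(μT T))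

/-- A modulus of continuity: a nonnegative function `φ` with `φ(r) → 0` as `r → 0⁺`. -/
def Modulus (φ : ℝ → ℝ) : Prop :=
  (∀ r, 0 ≤ φ r) ∧ Tendsto φ (𝓝[>] (0 : ℝ)) (𝓝 0)

/-- If `u ∈ L²(0,T;L²(𝕋²;ℝ²))` has `‖u(t)‖_{L²} = ‖ū‖_{L²}` for a.e. `t`,
and `(u_k)` is a sequence of continuous maps `[0,T] → L²(𝕋²;ℝ²)` with `t ↦ ‖u_k(t)‖_{L²}`
non-increasing, `u_k(0) → ū` strongly in `L²` and `u_k ⇀ u` weakly in `L²(0,T;L²)`, then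
`u_k → u` strongly in `L²(0,T;L²)`. -/


lemma sqnorm_nonneg (v : V) : 0 ≤ sqnorm v := by unfold sqnorm; positivity

lemma abs_dot_le (a b : V) : |dot a b| ≤ (1/2) * (sqnorm a + sqnorm b) := by
  rw [abs_le]; constructor <;> (unfold dot sqnorm) <;>
    nlinarith [sq_nonneg (a 0 + b 0), sq_nonneg (a 1 + b 1), sq_nonneg (a 0 - b 0), sq_nonneg (a 1 - b 1)]

lemma sqnorm_sub_eq (a b : V) : sqnorm (a - b) = sqnorm a - 2 * dot a b + sqnorm b := by
  simp only [sqnorm, dot, Pi.sub_apply]; ring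

lemma sqnorm_sub_le (a b : V) : sqnorm (a - b) ≤ 2 * sqnorm a + 2 * sqnorm b := by
  simp only [sqnorm, Pi.sub_apply]
  nlinarith [sq_nonneg (a 0 + b 0), sq_nonneg (a 1 + b 1)]

lemma sqnorm_le_young {δ : ℝ} (hδ : 0 < δ) (a b : V) :
    sqnorm a ≤ (1 + δ) * sqnorm b + (1 + 1/δ) * sqnorm (a - b) := by
  simp only [sqnorm, Pi.sub_apply]
  have h1 : δ * (1/δ) = 1 := by field_simp
  nlinarith [sq_nonneg (δ * b 0 - (a 0 - b 0)), sq_nonneg (δ * b 1 - (a 1 - b 1)),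
    mul_pos hδ hδ, sq_nonneg (a 0 - b 0), sq_nonneg (a 1 - b 1)]

lemma Measurable.sqnorm' {α : Type*} [MeasurableSpace α] {f : α → V} (hf : Measurable f) :
    Measurable fun x => sqnorm (f x) :=
  (((measurable_pi_apply 0).comp hf).pow_const 2).add (((measurable_pi_apply 1).comp hf).pow_const 2)

lemma AEMeasurable.sqnorm' {α : Type*} [MeasurableSpace α] {μ : Measure α} {f : α → V}
    (hf : AEMeasurable f μ) : AEMeasurable (fun x => sqnorm (f x)) μ :=
  ((((measurable_pi_apply 0).comp_aemeasurable hf)).pow_const 2).add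
    ((((measurable_pi_apply 1).comp_aemeasurable hf)).pow_const 2)

lemma Measurable.dot' {α : Type*} [MeasurableSpace α] {f g : α → V}
    (hf : Measurable f) (hg : Measurable g) : Measurable fun x => dot (f x) (g x) :=
  (((measurable_pi_apply 0).comp hf).mul ((measurable_pi_apply 0).comp hg)).add
    (((measurable_pi_apply 1).comp hf).mul ((measurable_pi_apply 1).comp hg))

theorem stmt9 (T : ℝ) (hT : 0 < T) (ubar : V → V) (hubar : MemL2x ubar)
    (u : ℝ → V → V) (hu : MemL2T T u)
    (henergy : ∀ᵐ t ∂(volume.restrict (Set.Ioc (0 : ℝ) T)), l2sq (u t) = l2sq ubar)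
    (uk : ℕ → ℝ → V → V)
    (hmem : ∀ k, MemL2T T (uk k))
    (hmemx : ∀ k, ∀ t ∈ Set.Icc (0 : ℝ) T, MemL2x (uk k t))
    -- each `u_k` is continuous as a map `[0,T] → L²(𝕋²;ℝ²)`
    (hcont : ∀ k, ∀ s ∈ Set.Icc (0 : ℝ) T,
      Tendsto (fun t => l2sq fun x => uk k t x - uk k s x)
        (𝓝[Set.Icc (0 : ℝ) T] s) (𝓝 0))
    -- `t ↦ ‖u_k(t)‖_{L²}` is non-increasing on `[0,T]`
    (hmono : ∀ k, ∀ s ∈ Set.Icc (0 : ℝ) T, ∀ t ∈ Set.Icc (0 : ℝ) T,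
      s ≤ t → l2sq (uk k t) ≤ l2sq (uk k s))
    -- `u_k(0) → ū` strongly in `L²(𝕋²;ℝ²)`
    (hinit : Tendsto (fun k => l2sq fun x => uk k 0 x - ubar x) atTop (𝓝 0))
    -- `u_k ⇀ u` weakly in `L²(0,T;L²(𝕋²;ℝ²))`
    (hweak : ∀ v : ℝ → V → V, MemL2T T v →
      Tendsto (fun k => pairT T (uk k) v) atTop (𝓝 (pairT T u v))) :
    Tendsto (fun k => ∫ q, sqnorm (uk k q.1 q.2 - u q.1 q.2) ∂(μT T)) atTop (𝓝 0) := by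
  have h0T : (0 : ℝ) ∈ Set.Icc (0 : ℝ) T := ⟨le_refl 0, hT.le⟩
  set L : ℝ := l2sq ubar with hLdef
  set d : ℕ → ℝ := fun k => l2sq fun x => uk k 0 x - ubar x with hddef
  set P : ℕ → ℝ := fun k => pairT T (uk k) u with hPdef
  set A : ℕ → ℝ := fun k => ∫ q, sqnorm (uk k q.1 q.2) ∂(μT T) with hAdef
  set c : ℕ → ℝ := fun k => l2sq (uk k 0) with hcdef
  have hL : 0 ≤ L := integral_nonneg fun x => sqnorm_nonneg _
  -- integrability of the cross term
  have hdotint : ∀ k, Integrable (fun q : ℝ × V => dot (uk k q.1 q.2) (u q.1 q.2)) (μT T) := by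
    intro k
    refine Integrable.mono' (((hmem k).2.add hu.2).const_mul (1/2))
      ((hmem k).1.dot' hu.1).aestronglyMeasurable ?_
    filter_upwards with q
    rw [Real.norm_eq_abs]
    exact abs_dot_le _ _
  -- expansion of the squared distance
  have hEeq : ∀ k, (∫ q, sqnorm (uk k q.1 q.2 - u q.1 q.2) ∂(μT T))
      = A k - 2 * P k + ∫ q, sqnorm (u q.1 q.2) ∂(μT T) := by
    intro k
    have heq : (fun q : ℝ × V => sqnorm (uk k q.1 q.2 - u q.1 q.2))
        = fun q => (sqnorm (uk k q.1 q.2) - 2 * dot (uk k q.1 q.2) (u q.1 q.2))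
            + sqnorm (u q.1 q.2) := by
      funext q; rw [sqnorm_sub_eq]
    have hi1 : Integrable (fun q : ℝ × V =>
        sqnorm (uk k q.1 q.2) - 2 * dot (uk k q.1 q.2) (u q.1 q.2)) (μT T) :=
      (hmem k).2.sub ((hdotint k).const_mul 2)
    rw [heq, integral_add hi1 hu.2,
      integral_sub (hmem k).2 ((hdotint k).const_mul 2), integral_const_mul]
    rfl
  -- value of ∫ sqnorm u
  have hB : (∫ q, sqnorm (u q.1 q.2) ∂(μT T)) = T * L := by
    rw [show μT T = (volume.restrict (Set.Ioc (0 : ℝ) T)).prod (volume.restrict Q2) from rfl,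
      integral_prod _ hu.2]
    have : (fun t => ∫ x, sqnorm (u t x) ∂(volume.restrict Q2)) = fun t => l2sq (u t) := rfl
    rw [this, integral_congr_ae henergy, integral_const, measureReal_restrict_apply_univ,
      Real.volume_real_Ioc_of_le hT.le, sub_zero, smul_eq_mul]
  have hconst : ∀ r : ℝ, Integrable (fun _ : ℝ => r) (volume.restrict (Set.Ioc (0 : ℝ) T)) := by
    intro r
    refine (integrableOn_const_iff (C := r)).mpr (Or.inr ?_)
    rw [Real.volume_Ioc]
    exact ENNReal.ofReal_lt_top
  -- A k ≤ T * c k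
  have hA : ∀ k, A k ≤ T * c k := by
    intro k
    have hAe : A k = ∫ t, l2sq (uk k t) ∂(volume.restrict (Set.Ioc (0 : ℝ) T)) := by
      show (∫ q : ℝ × V, sqnorm (uk k q.1 q.2) ∂(μT T)) = _
      rw [show μT T = (volume.restrict (Set.Ioc (0 : ℝ) T)).prod (volume.restrict Q2) from rfl,
        integral_prod _ (hmem k).2]
      rfl
    have hint : Integrable (fun t => l2sq (uk k t)) (volume.restrict (Set.Ioc (0 : ℝ) T)) :=
      (hmem k).2.integral_prod_left
    have hle : (fun t => l2sq (uk k t)) ≤ᵐ[volume.restrict (Set.Ioc (0 : ℝ) T)]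
        fun _ => l2sq (uk k 0) := by
      filter_upwards [ae_restrict_mem measurableSet_Ioc] with t ht
      exact hmono k 0 h0T t ⟨ht.1.le, ht.2⟩ ht.1.le
    calc A k = _ := hAe
      _ ≤ ∫ _, l2sq (uk k 0) ∂(volume.restrict (Set.Ioc (0 : ℝ) T)) :=
        integral_mono_ae hint (hconst _) hle
      _ = T * c k := by
        rw [integral_const, measureReal_restrict_apply_univ, Real.volume_real_Ioc_of_le hT.le, sub_zero,
          smul_eq_mul]
  -- c k ≤ (1+δ) L + (1+1/δ) d k
  have hck : ∀ δ : ℝ, 0 < δ → ∀ k, c k ≤ (1 + δ) * L + (1 + 1/δ) * d k := by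
    intro δ hδ k
    have hm0 := hmemx k 0 h0T
    have hintd : Integrable (fun x => sqnorm (uk k 0 x - ubar x)) (volume.restrict Q2) := by
      refine Integrable.mono' ((hm0.2.const_mul 2).add (hubar.2.const_mul 2))
        ((hm0.1.sub hubar.1).sqnorm').aestronglyMeasurable ?_
      filter_upwards with x
      rw [Real.norm_eq_abs, abs_of_nonneg (sqnorm_nonneg _)]
      exact sqnorm_sub_le _ _
    have h1 : c k ≤ ∫ x, ((1 + δ) * sqnorm (ubar x) + (1 + 1/δ) * sqnorm (uk k 0 x - ubar x))
        ∂(volume.restrict Q2) :=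
      integral_mono hm0.2 ((hubar.2.const_mul _).add (hintd.const_mul _))
        fun x => sqnorm_le_young hδ _ _
    rw [integral_add (hubar.2.const_mul _) (hintd.const_mul _), integral_const_mul,
      integral_const_mul] at h1
    exact h1
  -- weak convergence of the pairing
  have hPair_uu : pairT T u u = T * L := by
    rw [← hB]
    unfold pairT
    congr 1
    funext q
    simp only [dot, sqnorm]
    ring
  have hP : Tendsto P atTop (𝓝 (T * L)) := by
    rw [hPdef]
    have := hweak u hu
    rwa [hPair_uu] at this
  have hE0 : ∀ k, 0 ≤ ∫ q, sqnorm (uk k q.1 q.2 - u q.1 q.2) ∂(μT T) :=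
    fun k => integral_nonneg fun q => sqnorm_nonneg _
  rw [Metric.tendsto_atTop]
  intro ε hε
  set δ : ℝ := ε / (2 * T * (L + 1)) with hδdef
  have hδ : 0 < δ := by positivity
  have hFlim : Tendsto (fun k => T * ((1 + δ) * L + (1 + 1/δ) * d k) - 2 * P k + T * L)
      atTop (𝓝 (T * ((1 + δ) * L + (1 + 1/δ) * 0) - 2 * (T * L) + T * L)) :=
    (((tendsto_const_nhds.add (hinit.const_mul (1 + 1/δ))).const_mul T).sub
      (hP.const_mul 2)).add tendsto_const_nhds
  have hlt : T * ((1 + δ) * L + (1 + 1/δ) * 0) - 2 * (T * L) + T * L < ε := by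
    have h1 : T * ((1 + δ) * L + (1 + 1/δ) * 0) - 2 * (T * L) + T * L = T * δ * L := by ring
    rw [h1, hδdef]
    have h2 : T * (ε / (2 * T * (L + 1))) * L = ε * L / (2 * (L + 1)) := by
      field_simp
    rw [h2, div_lt_iff₀ (by positivity)]
    nlinarith
  obtain ⟨N, hN⟩ := eventually_atTop.mp (hFlim.eventually_lt_const hlt)
  refine ⟨N, fun n hn => ?_⟩
  rw [Real.dist_eq, sub_zero, abs_of_nonneg (hE0 n)]
  have h3 := hck δ hδ n
  have h4 : T * c n ≤ T * ((1 + δ) * L + (1 + 1/δ) * d n) :=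
    mul_le_mul_of_nonneg_left h3 hT.le
  calc (∫ q, sqnorm (uk n q.1 q.2 - u q.1 q.2) ∂(μT T)) = A n - 2 * P n + T * L := by
        rw [hEeq n, hB]
    _ ≤ T * ((1 + δ) * L + (1 + 1/δ) * d n) - 2 * P n + T * L := by linarith [hA n]
    _ < ε := hN n hn
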